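/- Let ε > 0 and p_- > 1. Then there exists δ > 0, depending only on ε and p_-, such that for all s, t ≥ 0 with |t − s| > ε·max{t, s} and all real exponents p ≥ p_-, one has ((t+s)/2)^p ≤ (1 − δ)·(t^p + s^p)/2. -/

import Mathlib

open Set Real

lemma strict_pt (pm : ℝ) (hpm : 1 < pm) (s : ℝ) (hs0 : 0 ≤ s) (hs1 : s ≠ 1) :
    ((1 + s) / 2) ^ pm < (1 + s ^ pm) / 2 := by
  have h := (strictConvexOn_rpow hpm).2 (mem_Ici.2 (zero_le_one)) (mem_Ici.2 hs0)
    (fun h => hs1 h.symm) (by norm_num : (0:ℝ) < 1/2) (by norm_num : (0:ℝ) < 1/2)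
    (by norm_num)
  simp only [smul_eq_mul] at h
  calc ((1 + s) / 2) ^ pm = (1/2 * 1 + 1/2 * s) ^ pm := by ring_nf
    _ < 1/2 * 1 ^ pm + 1/2 * s ^ pm := h
    _ = (1 + s ^ pm) / 2 := by rw [Real.one_rpow]; ring

lemma base_case (pm : ℝ) (hpm : 1 < pm) (ε : ℝ) (hε : 0 < ε) (hε1 : ε ≤ 1/2) :
    ∃ δ : ℝ, 0 < δ ∧ δ ≤ 1/2 ∧ ∀ s : ℝ, s ∈ Icc (0:ℝ) (1 - ε) →
      ((1 + s) / 2) ^ pm ≤ (1 - δ) * ((1 + s ^ pm) / 2) := by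
  have hpm0 : (0:ℝ) < pm := by linarith
  set g : ℝ → ℝ := fun s => (1 + s ^ pm) / 2 - ((1 + s) / 2) ^ pm with hg
  have hcont : ContinuousOn g (Icc 0 (1 - ε)) := by
    apply ContinuousOn.sub
    · exact (continuousOn_const.add (continuousOn_id.rpow_const
        (fun x _ => Or.inr hpm0.le))).div_const 2
    · exact ((continuousOn_const.add continuousOn_id).div_const 2).rpow_const
        (fun x _ => Or.inr hpm0.le)
  have hne : (Icc (0:ℝ) (1 - ε)).Nonempty := ⟨0, le_refl _, by linarith⟩
  obtain ⟨x, hx, hmin⟩ := (isCompact_Icc).exists_isMinOn hne hcont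
  have hgx : 0 < g x := by
    have := strict_pt pm hpm x hx.1 (by intro h; subst h; linarith [hx.2])
    simp only [hg]; linarith
  refine ⟨min (g x) (1/2), lt_min hgx (by norm_num), min_le_right _ _, ?_⟩
  intro s hs
  have h1 : min (g x) (1/2) ≤ g s := (min_le_left _ _).trans (hmin hs)
  have hs1 : s ≤ 1 := by linarith [hs.2]
  have hspm : s ^ pm ≤ 1 := by
    calc s ^ pm ≤ 1 ^ pm := Real.rpow_le_rpow hs.1 hs1 hpm0.le
      _ = 1 := Real.one_rpow pm
  have hA : (1 + s ^ pm) / 2 ≤ 1 := by linarith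
  have hA0 : 0 ≤ (1 + s ^ pm) / 2 := by
    have := Real.rpow_nonneg hs.1 pm; linarith
  have hδ0 : (0:ℝ) ≤ min (g x) (1/2) := le_of_lt (lt_min hgx (by norm_num))
  have : min (g x) (1/2) * ((1 + s ^ pm) / 2) ≤ g s :=
    le_trans (by nlinarith) h1
  simp only [hg] at this
  nlinarith

lemma ordered_case (ε pm : ℝ) (hε : 0 < ε) (hε1 : ε ≤ 1/2) (hpm : 1 < pm)
    (δ : ℝ) (hδ : 0 < δ) (hδ2 : δ ≤ 1/2)
    (hbase : ∀ s : ℝ, s ∈ Icc (0:ℝ) (1 - ε) →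
      ((1 + s) / 2) ^ pm ≤ (1 - δ) * ((1 + s ^ pm) / 2))
    (s t : ℝ) (hs : 0 ≤ s) (hst : s ≤ t) (hlt : ε * t < t - s)
    (p : ℝ) (hp : pm ≤ p) :
    ((t + s) / 2) ^ p ≤ (1 - δ) * ((t ^ p + s ^ p) / 2) := by
  have hpm0 : (0:ℝ) < pm := by linarith
  have ht : 0 < t := by
    rcases lt_or_ge 0 t with h | h
    · exact h
    · exfalso; nlinarith
  set u := s / t with hu
  have hu0 : 0 ≤ u := div_nonneg hs ht.le
  have hu1 : u ≤ 1 - ε := by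
    rw [hu, div_le_iff₀ ht]; nlinarith
  have hs_eq : s = t * u := by rw [hu]; field_simp
  -- base inequality for exponent pm
  have hbase' : ((t + s) / 2) ^ pm ≤ (1 - δ) * ((t ^ pm + s ^ pm) / 2) := by
    have h1 : (t + s) / 2 = t * ((1 + u) / 2) := by rw [hs_eq]; ring
    have h2 : ((t + s) / 2) ^ pm = t ^ pm * ((1 + u) / 2) ^ pm := by
      rw [h1, Real.mul_rpow ht.le (by linarith)]
    have h3 := hbase u ⟨hu0, hu1⟩
    have h4 : s ^ pm = t ^ pm * u ^ pm := by
      rw [hs_eq, Real.mul_rpow ht.le hu0]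
    have htpm : 0 < t ^ pm := Real.rpow_pos_of_pos ht pm
    rw [h2, h4]
    calc t ^ pm * ((1 + u) / 2) ^ pm
        ≤ t ^ pm * ((1 - δ) * ((1 + u ^ pm) / 2)) :=
          mul_le_mul_of_nonneg_left h3 htpm.le
      _ = (1 - δ) * ((t ^ pm + t ^ pm * u ^ pm) / 2) := by ring
  -- raise to power q = p / pm
  set q := p / pm with hq
  have hq1 : 1 ≤ q := (one_le_div hpm0).2 hp
  have hpq : p = pm * q := by rw [hq]; field_simp
  have hts2 : 0 ≤ (t + s) / 2 := by linarith
  have hLHS : ((t + s) / 2) ^ p = (((t + s) / 2) ^ pm) ^ q := by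
    rw [hpq, Real.rpow_mul hts2]
  have hmid0 : 0 ≤ (t ^ pm + s ^ pm) / 2 := by
    have := Real.rpow_nonneg ht.le pm; have := Real.rpow_nonneg hs pm; linarith
  have step1 : (((t + s) / 2) ^ pm) ^ q ≤ ((1 - δ) * ((t ^ pm + s ^ pm) / 2)) ^ q :=
    Real.rpow_le_rpow (Real.rpow_nonneg hts2 pm) hbase' (by linarith)
  have step2 : ((1 - δ) * ((t ^ pm + s ^ pm) / 2)) ^ q
      = (1 - δ) ^ q * ((t ^ pm + s ^ pm) / 2) ^ q :=
    Real.mul_rpow (by linarith) hmid0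
  have step3 : (1 - δ) ^ q ≤ 1 - δ := by
    have := Real.rpow_le_rpow_of_exponent_ge (by linarith : (0:ℝ) < 1 - δ)
      (by linarith) hq1
    rwa [Real.rpow_one] at this
  have step4 : ((t ^ pm + s ^ pm) / 2) ^ q ≤ (t ^ p + s ^ p) / 2 := by
    have h := (convexOn_rpow hq1).2 (mem_Ici.2 (Real.rpow_nonneg ht.le pm))
      (mem_Ici.2 (Real.rpow_nonneg hs pm)) (by norm_num : (0:ℝ) ≤ 1/2)
      (by norm_num : (0:ℝ) ≤ 1/2) (by norm_num)
    simp only [smul_eq_mul] at h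
    have e1 : (t ^ pm) ^ q = t ^ p := by rw [← Real.rpow_mul ht.le, ← hpq]
    have e2 : (s ^ pm) ^ q = s ^ p := by rw [← Real.rpow_mul hs, ← hpq]
    calc ((t ^ pm + s ^ pm) / 2) ^ q = (1/2 * t ^ pm + 1/2 * s ^ pm) ^ q := by ring_nf
      _ ≤ 1/2 * (t ^ pm) ^ q + 1/2 * (s ^ pm) ^ q := h
      _ = (t ^ p + s ^ p) / 2 := by rw [e1, e2]; ring
  have hmq0 : 0 ≤ ((t ^ pm + s ^ pm) / 2) ^ q := Real.rpow_nonneg hmid0 q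
  calc ((t + s) / 2) ^ p = (((t + s) / 2) ^ pm) ^ q := hLHS
    _ ≤ (1 - δ) ^ q * ((t ^ pm + s ^ pm) / 2) ^ q := by rw [← step2]; exact step1
    _ ≤ (1 - δ) * ((t ^ p + s ^ p) / 2) := by
        apply mul_le_mul step3 step4 hmq0 (by linarith)

/-- Uniform convexity of the power functions `t ↦ t^p`, with a modulus uniform over
all exponents `p ≥ p₋ > 1`. -/
theorem uniform_convexity_powers (ε pm : ℝ) (hε : 0 < ε) (hpm : 1 < pm) :
    ∃ δ : ℝ, 0 < δ ∧ ∀ s t : ℝ, 0 ≤ s → 0 ≤ t → ε * max t s < |t - s| →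
      ∀ p : ℝ, pm ≤ p →
        ((t + s) / 2) ^ p ≤ (1 - δ) * ((t ^ p + s ^ p) / 2) := by
  set ε₀ := min ε (1/2) with hε₀
  have hε₀0 : 0 < ε₀ := lt_min hε (by norm_num)
  have hε₀1 : ε₀ ≤ 1/2 := min_le_right _ _
  obtain ⟨δ, hδ0, hδ2, hbase⟩ := base_case pm hpm ε₀ hε₀0 hε₀1
  refine ⟨δ, hδ0, ?_⟩
  intro s t hs ht hgap p hp
  rcases le_total s t with h | h
  · have hmax : max t s = t := max_eq_left h
    have habs : |t - s| = t - s := abs_of_nonneg (by linarith)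
    have hlt : ε₀ * t < t - s := by
      have : ε₀ * t ≤ ε * t := mul_le_mul_of_nonneg_right (min_le_left _ _) ht
      rw [hmax, habs] at hgap; linarith
    exact ordered_case ε₀ pm hε₀0 hε₀1 hpm δ hδ0 hδ2 hbase s t hs h hlt p hp
  · have hmax : max t s = s := max_eq_right h
    have habs : |t - s| = s - t := by rw [abs_sub_comm]; exact abs_of_nonneg (by linarith)
    have hlt : ε₀ * s < s - t := by
      have : ε₀ * s ≤ ε * s := mul_le_mul_of_nonneg_right (min_le_left _ _) hs
      rw [hmax, habs] at hgap; linarith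
    have := ordered_case ε₀ pm hε₀0 hε₀1 hpm δ hδ0 hδ2 hbase t s ht h hlt p hp
    calc ((t + s) / 2) ^ p = ((s + t) / 2) ^ p := by ring_nf
      _ ≤ (1 - δ) * ((s ^ p + t ^ p) / 2) := this
      _ = (1 - δ) * ((t ^ p + s ^ p) / 2) := by ring
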